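/- Let α ∈ F_q[x_0,...,x_n] be a homogeneous polynomial that is either zero or nonzero of degree q−1, and consider the F_q-vector space V spanned by the n+1 polynomials x_j^q − α·x_j (j = 0,...,n). If dim V ≤ n, then dim V = n and there is an invertible F_q-linear change of coordinates y_0,...,y_n such that α = y_0^{q-1}, and the polynomials y_j^q − y_0^{q-1} y_j for j = 1,...,n form a basis of V. -/

import Mathlib

open MvPolynomial

namespace Stmt19Aux

variable {F : Type*} [Field F] [Fintype F] {n : ℕ}

noncomputable def lfL : (Fin (n + 1) → F) →ₗ[F] MvPolynomial (Fin (n + 1)) F where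
  toFun c := ∑ j, c j • X j
  map_add' c c' := by simp [add_smul, Finset.sum_add_distrib]
  map_smul' a c := by simp [Finset.smul_sum, smul_smul]

lemma lfL_apply (c : Fin (n + 1) → F) : (lfL c : MvPolynomial (Fin (n + 1)) F) = ∑ j, c j • X j :=
  rfl

lemma lfL_eq_C_mul (c : Fin (n + 1) → F) :
    (lfL c : MvPolynomial (Fin (n + 1)) F) = ∑ j, C (c j) * X j := by
  simp [lfL_apply, smul_eq_C_mul]

lemma lfL_inj : Function.Injective (lfL (F := F) (n := n)) := by
  rw [← LinearMap.ker_eq_bot, LinearMap.ker_eq_bot']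
  intro c hc
  have h := Fintype.linearIndependent_iff.mp (MvPolynomial.linearIndependent_X
    (Fin (n + 1)) F) c hc
  funext j; exact h j

lemma lfL_single [DecidableEq (Fin (n + 1))] (j : Fin (n + 1)) :
    (lfL (Pi.single j (1 : F)) : MvPolynomial (Fin (n + 1)) F) = X j := by
  rw [lfL_apply]
  simp [Pi.single_apply, ite_smul]

lemma lfL_coeff (c : Fin (n + 1) → F) (j : Fin (n + 1)) :
    coeff (Finsupp.single j 1) (lfL c) = c j := by
  classical
  rw [lfL_apply, coeff_sum]
  have h1 : ∀ j' : Fin (n + 1),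
      coeff (Finsupp.single j 1) (c j' • X j' : MvPolynomial (Fin (n + 1)) F)
        = if j' = j then c j' else 0 := by
    intro j'
    rw [coeff_smul, coeff_X']
    rcases eq_or_ne j' j with rfl | hj
    · simp
    · rw [if_neg (fun hh => hj ((Finsupp.single_left_inj one_ne_zero).mp hh)), if_neg hj,
        smul_zero]
  rw [Finset.sum_congr rfl fun j' _ => h1 j']
  simp

lemma prime_X_fin (k : Fin (n + 1)) : Prime (X k : MvPolynomial (Fin (n + 1)) F) := by
  have h0 : Prime (X (0 : Fin (n + 1)) : MvPolynomial (Fin (n + 1)) F) := by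
    have hP : Prime (Polynomial.X : Polynomial (MvPolynomial (Fin n) F)) := Polynomial.prime_X
    have he : (finSuccEquiv F n).toMulEquiv (X (0 : Fin (n + 1)) : MvPolynomial (Fin (n + 1)) F)
        = Polynomial.X := finSuccEquiv_X_zero
    rw [← MulEquiv.prime_iff (finSuccEquiv F n).toMulEquiv, he]
    exact hP
  have he : ((renameEquiv F (Equiv.swap k 0)).toMulEquiv (X k) : MvPolynomial (Fin (n + 1)) F)
      = X 0 := by
    show rename (Equiv.swap k 0) (X k) = X 0
    rw [rename_X, Equiv.swap_apply_left]
  rw [← MulEquiv.prime_iff (renameEquiv F (Equiv.swap k 0)).toMulEquiv, he]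
  exact h0

lemma lf_pow_card (c : Fin (n + 1) → F) :
    (lfL c : MvPolynomial (Fin (n + 1)) F) ^ Fintype.card F
      = ∑ j, c j • X j ^ Fintype.card F := by
  have := ringChar.charP F
  obtain ⟨m, hp, hcard⟩ := FiniteField.card F (ringChar F)
  haveI : Fact (ringChar F).Prime := ⟨hp⟩
  rw [lfL_apply, hcard, sum_pow_char_pow]
  refine Finset.sum_congr rfl fun j _ => ?_
  rw [smul_pow, ← hcard, FiniteField.pow_card]

lemma Phi_eq (α : MvPolynomial (Fin (n + 1)) F) (c : Fin (n + 1) → F) :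
    ∑ j, c j • (X j ^ Fintype.card F - α * X j)
      = lfL c ^ Fintype.card F - α * lfL c := by
  rw [lf_pow_card]
  simp_rw [smul_sub, Finset.sum_sub_distrib, ← mul_smul_comm]
  rw [lfL_apply, Finset.mul_sum]

lemma rel_alpha (α : MvPolynomial (Fin (n + 1)) F) {c : Fin (n + 1) → F} (hc : c ≠ 0)
    (h : ∑ j, c j • (X j ^ Fintype.card F - α * X j) = 0) :
    α = lfL c ^ (Fintype.card F - 1) := by
  rw [Phi_eq, sub_eq_zero] at h
  have hL : (lfL c : MvPolynomial (Fin (n + 1)) F) ≠ 0 := by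
    intro h0
    exact hc (lfL_inj (by rw [h0, map_zero]))
  have hq1 : Fintype.card F = (Fintype.card F - 1) + 1 :=
    (Nat.succ_pred_eq_of_pos Fintype.card_pos).symm
  rw [hq1, pow_succ] at h
  exact (mul_right_cancel₀ hL h).symm

lemma sum_exchange {ι : Type*} [Fintype ι] (d : ι → F) (w : ι → Fin (n + 1) → F)
    (f : Fin (n + 1) → MvPolynomial (Fin (n + 1)) F) :
    ∑ i, d i • ∑ j, w i j • f j = ∑ j, (∑ i, d i * w i j) • f j := by
  simp_rw [Finset.smul_sum, smul_smul, Finset.sum_smul]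
  exact Finset.sum_comm

lemma lemB {m : ℕ} (hm : m ≠ 0) {c c' : Fin (n + 1) → F} (hc : c ≠ 0)
    (h : (lfL c' : MvPolynomial (Fin (n + 1)) F) ^ m = lfL c ^ m) :
    ∃ a : F, c' = a • c := by
  classical
  obtain ⟨k, hk⟩ : ∃ k, c k ≠ 0 := by
    by_contra hall; push_neg at hall; exact hc (funext hall)
  set L : MvPolynomial (Fin (n + 1)) F := lfL c with hL
  set u : Fin (n + 1) → MvPolynomial (Fin (n + 1)) F :=
    fun j => if j = k then (c k)⁻¹ • ((1 + c k) • X k - L) else X j with hu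
  set v : Fin (n + 1) → MvPolynomial (Fin (n + 1)) F :=
    fun j => if j = k then L else X j with hv
  have haev : ∀ (w : Fin (n + 1) → MvPolynomial (Fin (n + 1)) F) (b : Fin (n + 1) → F),
      aeval w (lfL b) = ∑ j, b j • w j := by
    intro w b
    rw [lfL_apply, map_sum]
    exact Finset.sum_congr rfl fun j _ => by rw [map_smul, aeval_X]
  have hsplit : ∀ (b : Fin (n + 1) → F) (P : MvPolynomial (Fin (n + 1)) F),
      ∑ j, b j • (if j = k then P else X j) = b k • P + (lfL b - b k • X k) := by
    intro b P
    rw [← Finset.add_sum_erase _ _ (Finset.mem_univ k), if_pos rfl]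
    congr 1
    have h1 : ∑ j ∈ Finset.univ.erase k, b j • (if j = k then P else X j)
        = ∑ j ∈ Finset.univ.erase k, b j • X j :=
      Finset.sum_congr rfl fun j hj => by rw [if_neg (Finset.ne_of_mem_erase hj)]
    rw [h1, lfL_apply, ← Finset.add_sum_erase _ (fun j => b j • X j) (Finset.mem_univ k)]
    abel
  have hvL : aeval v L = c k • L + (L - c k • X k) := by
    rw [hL, haev]
    exact hsplit c L
  have huL : aeval u L = X k := by
    rw [hL, haev]
    rw [show ∑ j, c j • u j = c k • ((c k)⁻¹ • ((1 + c k) • X k - L)) + (lfL c - c k • X k) from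
      hsplit c _]
    rw [smul_smul, mul_inv_cancel₀ hk, one_smul, ← hL]
    module
  have hcomp : ∀ P, aeval v (aeval u P) = P := by
    have hAB : (aeval v).comp (aeval u)
        = AlgHom.id F (MvPolynomial (Fin (n + 1)) F) := by
      apply algHom_ext
      intro j
      simp only [AlgHom.comp_apply, AlgHom.id_apply, aeval_X]
      rcases eq_or_ne j k with rfl | hj
      · rw [show u j = (c j)⁻¹ • ((1 + c j) • X j - L) from if_pos rfl]
        rw [map_smul, map_sub, map_smul, aeval_X, hvL,
          show v j = L from if_pos rfl]
        rw [smul_sub, smul_smul]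
        match_scalars <;> field_simp <;> ring
      · rw [show u j = X j from if_neg hj, aeval_X, show v j = X j from if_neg hj]
    intro P
    exact AlgHom.congr_fun hAB P
  have hinj : Function.Injective (aeval u : MvPolynomial (Fin (n + 1)) F →ₐ[F] _) :=
    Function.LeftInverse.injective hcomp
  set w : Fin (n + 1) → (Fin (n + 1) → F) :=
    fun j => if j = k then (c k)⁻¹ • ((1 + c k) • (Pi.single k 1 : Fin (n + 1) → F) - c) else Pi.single j 1 with hw
  have huw : ∀ j, u j = lfL (w j) := by
    intro j
    rcases eq_or_ne j k with rfl | hj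
    · rw [show u j = (c j)⁻¹ • ((1 + c j) • X j - L) from if_pos rfl,
        show w j = (c j)⁻¹ • ((1 + c j) • (Pi.single j 1 : Fin (n + 1) → F) - c) from if_pos rfl,
        map_smul, map_sub, map_smul, lfL_single, hL]
    · rw [show u j = X j from if_neg hj, show w j = Pi.single j 1 from if_neg hj, lfL_single]
  set d : Fin (n + 1) → F := ∑ j, c' j • w j with hd
  have hτc' : aeval u (lfL c') = lfL d := by
    rw [haev, hd, map_sum]
    exact Finset.sum_congr rfl fun j _ => by rw [huw j, map_smul]
  have hpow : (lfL d : MvPolynomial (Fin (n + 1)) F) ^ m = (X k) ^ m := by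
    have h2 := congrArg (aeval u) h
    rwa [map_pow, map_pow, hτc', huL] at h2
  have hdvd : (X k : MvPolynomial (Fin (n + 1)) F) ∣ lfL d := by
    refine (prime_X_fin k).dvd_of_dvd_pow (n := m) ?_
    rw [hpow]
    exact dvd_pow_self _ hm
  obtain ⟨t, ht⟩ := hdvd
  have hdj : ∀ j, j ≠ k → d j = 0 := by
    intro j hj
    have h1 : coeff (Finsupp.single j 1) (lfL d) = d j := lfL_coeff d j
    rw [ht, coeff_X_mul'] at h1
    rw [← h1, if_neg]
    simp [Finsupp.support_single_ne_zero, hj.symm]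
  obtain ⟨a, hdd⟩ : ∃ a : F, d = a • (Pi.single k 1 : Fin (n + 1) → F) := by
    refine ⟨d k, funext fun j => ?_⟩
    rcases eq_or_ne j k with rfl | hj
    · simp
    · simp [hdj j hj, Pi.single_apply, hj]
  have hfin : aeval u (lfL c') = aeval u (lfL (a • c)) := by
    rw [hτc', hdd, map_smul, lfL_single, map_smul, map_smul, huL]
  exact ⟨a, lfL_inj (hinj hfin)⟩

end Stmt19Aux

open Stmt19Aux

/-- Let α ∈ F_q[x_0,...,x_n] be homogeneous, either zero or of degree q−1, and
let V be the F_q-span of the n+1 polynomials x_j^q − α x_j. If dim V ≤ n, then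
dim V = n and there is an invertible F_q-linear change of coordinates
y_i = Σ_j g_{ij} x_j such that α = y_0^{q-1} and the polynomials
y_j^q − α y_j = y_j^q − y_0^{q-1} y_j (j = 1,...,n) form a basis of V. -/
theorem stmt19 {F : Type*} [Field F] [Fintype F] (q n : ℕ) (hq : Fintype.card F = q)
    (α : MvPolynomial (Fin (n + 1)) F) (hα : α.IsHomogeneous (q - 1))
    (V : Submodule F (MvPolynomial (Fin (n + 1)) F))
    (hV : V = Submodule.span F (Set.range fun j : Fin (n + 1) => X j ^ q - α * X j))
    (hdim : Module.finrank F V ≤ n) :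
    Module.finrank F V = n ∧
    ∃ g : Matrix (Fin (n + 1)) (Fin (n + 1)) F, IsUnit g ∧
      α = (∑ j, C (g 0 j) * X j) ^ (q - 1) ∧
      LinearIndependent F (fun i : Fin n =>
        (∑ j, C (g i.succ j) * X j) ^ q - α * (∑ j, C (g i.succ j) * X j)) ∧
      Submodule.span F (Set.range fun i : Fin n =>
        (∑ j, C (g i.succ j) * X j) ^ q - α * (∑ j, C (g i.succ j) * X j)) = V := by
  classical
  subst hq
  subst hV
  set f : Fin (n + 1) → MvPolynomial (Fin (n + 1)) F :=
    fun j => X j ^ Fintype.card F - α * X j with hf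
  -- Step 1: the family f is linearly dependent
  have hdep : ¬ LinearIndependent F f := by
    intro h
    have h2 := finrank_span_eq_card h
    rw [Fintype.card_fin] at h2
    rw [h2] at hdim
    omega
  obtain ⟨c, hcrel, i0, hi0⟩ := Fintype.not_linearIndependent_iff.mp hdep
  have hc0 : c ≠ 0 := fun h => hi0 (by rw [h]; rfl)
  have hαc : α = lfL c ^ (Fintype.card F - 1) := rel_alpha α hc0 hcrel
  obtain ⟨k, hk⟩ : ∃ k, c k ≠ 0 := ⟨i0, hi0⟩
  -- Step 2: the matrix
  set σ : Equiv.Perm (Fin (n + 1)) := Equiv.swap 0 k with hσ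
  set g : Matrix (Fin (n + 1)) (Fin (n + 1)) F :=
    Matrix.of fun i j => if i = 0 then c j else if j = σ i then 1 else 0 with hg
  have hg0 : g 0 = c := by
    funext j
    simp [hg]
  have hgrow : ∀ i : Fin (n + 1), i ≠ 0 → ∀ j, g i j = if j = σ i then 1 else 0 := by
    intro i hi j
    simp only [hg, Matrix.of_apply]
    exact if_neg hi
  have hrows : LinearIndependent F (fun i => g i) := by
    rw [Fintype.linearIndependent_iff]
    intro d hd
    have hco : ∀ j, ∑ i, d i * g i j = 0 := by
      intro j
      have := congrFun hd j
      simpa [Finset.sum_apply] using this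
    have hd0 : d 0 = 0 := by
      have h := hco k
      rw [Finset.sum_eq_single 0] at h
      · rw [hg0] at h
        exact (mul_eq_zero.mp h).resolve_right hk
      · intro i _ hi
        rw [hgrow i hi k, if_neg, mul_zero]
        intro hik
        apply hi
        have h1 : i = σ k := by rw [hik, hσ, Equiv.swap_apply_self]
        rw [h1, hσ, Equiv.swap_apply_right]
      · intro h; exact absurd (Finset.mem_univ 0) h
    intro i
    rcases eq_or_ne i 0 with rfl | hi
    · exact hd0
    · have h := hco (σ i)
      rw [Finset.sum_eq_single i] at h
      · rwa [hgrow i hi (σ i), if_pos rfl, mul_one] at h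
      · intro i' _ hne
        rcases eq_or_ne i' 0 with rfl | h0
        · rw [hd0, zero_mul]
        · rw [hgrow i' h0 (σ i), if_neg (fun hh => hne (σ.injective hh.symm)), mul_zero]
      · intro h; exact absurd (Finset.mem_univ i) h
  have hgu : IsUnit g := Matrix.linearIndependent_rows_iff_isUnit.mp hrows
  -- rewrite the target family
  have hfam : (fun i : Fin n =>
        (∑ j, C (g i.succ j) * X j) ^ Fintype.card F - α * (∑ j, C (g i.succ j) * X j))
      = fun i => ∑ j, g i.succ j • f j := by
    funext i
    rw [← lfL_eq_C_mul]
    exact (Phi_eq α (g i.succ)).symm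
  -- linear independence
  have hind : LinearIndependent F (fun i : Fin n => ∑ j, g i.succ j • f j) := by
    rw [Fintype.linearIndependent_iff]
    intro d hd
    set c' : Fin (n + 1) → F := fun j => ∑ i, d i * g i.succ j with hc'
    have hrel' : ∑ j, c' j • f j = 0 := by
      rw [← sum_exchange d (fun i => g i.succ) f]
      exact hd
    have ha : ∃ a : F, c' = a • c := by
      rcases eq_or_ne c' 0 with h | h
      · exact ⟨0, by rw [h, zero_smul]⟩
      · have hαc' := rel_alpha α h hrel'
        have hQ : Fintype.card F - 1 ≠ 0 := by
          have := Fintype.one_lt_card (α := F)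
          omega
        exact lemB hQ hc0 (by rw [← hαc', ← hαc])
    obtain ⟨a, ha⟩ := ha
    have hall : ∀ i : Fin (n + 1), (Fin.cases (-a) d : ∀ _ : Fin (n + 1), F) i = 0 := by
      apply Fintype.linearIndependent_iff.mp hrows
      rw [Fin.sum_univ_succ]
      simp only [Fin.cases_zero, Fin.cases_succ]
      have hsum : ∑ i : Fin n, d i • g i.succ = c' := by
        funext j
        simp [Finset.sum_apply, hc']
      rw [hsum, hg0, ha, neg_smul, neg_add_cancel]
    intro i
    simpa using hall i.succ
  -- span
  have hE0 : (∑ j', g 0 j' • f j') = 0 := by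
    rw [hg0]
    exact hcrel
  have hspan : Submodule.span F (Set.range (fun i : Fin n => ∑ j, g i.succ j • f j))
      = Submodule.span F (Set.range f) := by
    apply le_antisymm
    · rw [Submodule.span_le]
      rintro _ ⟨i, rfl⟩
      exact Submodule.sum_mem _ fun j _ =>
        Submodule.smul_mem _ _ (Submodule.subset_span ⟨j, rfl⟩)
    · rw [Submodule.span_le]
      rintro _ ⟨j, rfl⟩
      set B : Matrix (Fin (n + 1)) (Fin (n + 1)) F := ↑hgu.unit⁻¹ with hBdef
      have hB : B * g = 1 := hgu.val_inv_mul
      have key : f j = ∑ i, B j i • (∑ j', g i j' • f j') := by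
        refine Eq.trans ?_ (sum_exchange (fun i => B j i) (fun i j' => g i j') f).symm
        simp_rw [← Matrix.mul_apply, hB]
        simp [Matrix.one_apply, ite_smul]
      rw [key, Fin.sum_univ_succ, hE0, smul_zero, zero_add]
      exact Submodule.sum_mem _ fun i _ =>
        Submodule.smul_mem _ _ (Submodule.subset_span ⟨i, rfl⟩)
  have hfr : Module.finrank F (Submodule.span F (Set.range f)) = n := by
    rw [← hspan, finrank_span_eq_card hind, Fintype.card_fin]
  refine ⟨hfr, g, hgu, ?_, ?_, ?_⟩
  · rw [← lfL_eq_C_mul, hg0]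
    exact hαc
  · rw [hfam]
    exact hind
  · rw [hfam]
    exact hspan
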